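/- Let X be a Banach space such that the ideal E(X) of inessential operators is a maximal two-sided ideal in B(X) and X has a complemented subspace isomorphic to X ⊕ X. Then for every nonzero Banach space Y, every surjective algebra homomorphism ψ : B(X) → B(Y) is injective. -/

import Mathlib

open Function

universe u

/-- Fredholm operator: finite-dimensional kernel and finite-codimensional range. -/
def IsFredholmOp {X : Type*} [NormedAddCommGroup X] [NormedSpace ℂ X]
    (f : X →L[ℂ] X) : Prop :=
  FiniteDimensional ℂ (LinearMap.ker (f : X →ₗ[ℂ] X)) ∧
    FiniteDimensional ℂ (X ⧸ LinearMap.range (f : X →ₗ[ℂ] X))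

/-- Inessential operator: `I + S * T` is Fredholm for every `S`. -/
def IsInessentialOp {X : Type*} [NormedAddCommGroup X] [NormedSpace ℂ X]
    (T : X →L[ℂ] X) : Prop :=
  ∀ S : X →L[ℂ] X, IsFredholmOp (1 + S * T)

open ContinuousLinearMap

section Aux

variable {X : Type*} [NormedAddCommGroup X] [NormedSpace ℂ X]
variable {Y : Type u} [NormedAddCommGroup Y] [NormedSpace ℂ Y]

private lemma kill_rank_one (ψ : (X →L[ℂ] X) →ₐ[ℂ] (Y →L[ℂ] Y))
    {T₀ : X →L[ℂ] X} (hT₀ : ψ T₀ = 0) (hne : T₀ ≠ 0)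
    (f : X →L[ℂ] ℂ) (e : X) : ψ (f.smulRight e) = 0 := by
  obtain ⟨x₀, hx₀⟩ : ∃ x₀, T₀ x₀ ≠ 0 := by
    by_contra h
    push_neg at h
    exact hne (by ext x; simpa using h x)
  obtain ⟨h, -, hh⟩ := exists_dual_vector ℂ (T₀ x₀) (norm_ne_zero_iff.mpr hx₀)
  have hc : h (T₀ x₀) ≠ 0 := by
    rw [hh]
    simpa using hx₀
  have key : (((h (T₀ x₀))⁻¹ • h).smulRight e) * T₀ * (f.smulRight x₀) = f.smulRight e := by
    ext x
    simp only [ContinuousLinearMap.mul_apply, smulRight_apply, map_smul, smul_apply,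
      smul_eq_mul, smul_smul]
    congr 1
    field_simp
  calc ψ (f.smulRight e)
      = ψ ((((h (T₀ x₀))⁻¹ • h).smulRight e)) * ψ T₀ * ψ (f.smulRight x₀) := by
        rw [← map_mul, ← map_mul, key]
    _ = 0 := by rw [hT₀, mul_zero, zero_mul]


private lemma kill_finite_rank (ψ : (X →L[ℂ] X) →ₐ[ℂ] (Y →L[ℂ] Y))
    {T₀ : X →L[ℂ] X} (hT₀ : ψ T₀ = 0) (hne : T₀ ≠ 0)
    (F : X →L[ℂ] X) (hF : FiniteDimensional ℂ (LinearMap.range (F : X →ₗ[ℂ] X))) :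
    ψ F = 0 := by
  set R := LinearMap.range (F : X →ₗ[ℂ] X) with hR
  haveI : FiniteDimensional ℂ R := hF
  set b := Module.finBasis ℂ R with hb
  set F' : X →L[ℂ] R := F.codRestrict R (fun x => LinearMap.mem_range_self _ x) with hF'
  have key : F = ∑ i, ((LinearMap.toContinuousLinearMap (b.coord i)).comp F').smulRight
      ((b i : X)) := by
    ext x
    have h1 : F x = ((F' x : R) : X) := rfl
    rw [h1, ← b.sum_repr (F' x)]
    push_cast
    simp [Module.Basis.coord_apply]
  rw [key, map_sum]
  refine Finset.sum_eq_zero fun i _ => ?_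
  exact kill_rank_one ψ hT₀ hne _ _


private lemma fredholm_left_inv {X : Type*} [NormedAddCommGroup X] [NormedSpace ℂ X] [CompleteSpace X]
    (U : X →L[ℂ] X) (h : IsFredholmOp U) :
    ∃ V F : X →L[ℂ] X, V * U = 1 - F ∧
      FiniteDimensional ℂ (LinearMap.range (F : X →ₗ[ℂ] X)) := by
  obtain ⟨hker, hcoker⟩ := h
  set N : Submodule ℂ X := LinearMap.ker (U : X →ₗ[ℂ] X) with hN
  haveI : FiniteDimensional ℂ N := hker
  obtain ⟨p, hp⟩ := Submodule.ClosedComplemented.of_finiteDimensional N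
  set π : X →L[ℂ] X := N.subtypeL.comp p with hπ
  have hπmem : ∀ x, π x ∈ N := fun x => (p x).2
  have hπid : ∀ x, x ∈ N → π x = x := by
    intro x hx
    have := hp ⟨x, hx⟩
    simp [hπ, this]
  set W : Submodule ℂ X := LinearMap.ker (π : X →ₗ[ℂ] X) with hW
  haveI : CompleteSpace W := (ContinuousLinearMap.isClosed_ker π).completeSpace_coe
  obtain ⟨M, hM⟩ := Submodule.exists_isCompl (LinearMap.range (U : X →ₗ[ℂ] X))
  haveI : FiniteDimensional ℂ M :=
    LinearEquiv.finiteDimensional (Submodule.quotientEquivOfIsCompl _ M hM)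
  set Φ : (W × M) →L[ℂ] X := (U.comp W.subtypeL).coprod M.subtypeL with hΦ
  have hmemW : ∀ x : X, x - π x ∈ W := by
    intro x
    have : π (x - π x) = 0 := by
      rw [map_sub, hπid (π x) (hπmem x), sub_self]
    simpa [hW, LinearMap.mem_ker] using this
  have hUπ : ∀ x : X, U (π x) = 0 := fun x => hπmem x
  have hinj : LinearMap.ker (Φ : (W × M) →ₗ[ℂ] X) = ⊥ := by
    rw [LinearMap.ker_eq_bot']
    rintro ⟨w, m⟩ hwm
    have h1 : U (w : X) + (m : X) = 0 := by simpa [hΦ] using hwm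
    have h2 : (m : X) ∈ LinearMap.range (U : X →ₗ[ℂ] X) := by
      refine ⟨-(w : X), ?_⟩
      have h2 := eq_neg_of_add_eq_zero_left h1
      simp [map_neg, h2]
    have hm0 : (m : X) = 0 := by
      have := hM.inf_eq_bot
      have : (m : X) ∈ (LinearMap.range (U : X →ₗ[ℂ] X)) ⊓ M := ⟨h2, m.2⟩
      rw [hM.inf_eq_bot] at this
      simpa using this
    have hUw : U (w : X) = 0 := by
      rw [hm0] at h1; simpa using h1
    have hwN : (w : X) ∈ N := hUw
    have hw0 : (w : X) = 0 := by
      have hwW : π (w : X) = 0 := w.2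
      rw [hπid _ hwN] at hwW
      exact hwW
    ext <;> simp [hw0, hm0]
  have hsurj : LinearMap.range (Φ : (W × M) →ₗ[ℂ] X) = ⊤ := by
    rw [LinearMap.range_eq_top]
    intro x
    have hx : x ∈ (LinearMap.range (U : X →ₗ[ℂ] X)) ⊔ M := by
      rw [hM.sup_eq_top]; trivial
    obtain ⟨r, hr, m, hm, rfl⟩ := Submodule.mem_sup.mp hx
    obtain ⟨z, rfl⟩ := hr
    refine ⟨(⟨z - π z, hmemW z⟩, ⟨m, hm⟩), ?_⟩
    simp [hΦ, map_sub, hUπ z]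
  set e := ContinuousLinearEquiv.ofBijective Φ hinj hsurj with he
  refine ⟨W.subtypeL.comp ((ContinuousLinearMap.fst ℂ W M).comp (e.symm : X →L[ℂ] (W × M))),
    π, ?_, ?_⟩
  · ext x
    have hx : U x = Φ (⟨x - π x, hmemW x⟩, 0) := by
      simp [hΦ, map_sub, hUπ x]
    have : e.symm (U x) = (⟨x - π x, hmemW x⟩, 0) := by
      rw [hx]
      exact e.symm_apply_apply _
    simp [ContinuousLinearMap.mul_apply, this]
  · have : LinearMap.range (π : X →ₗ[ℂ] X) ≤ N := fun x hx => by
      obtain ⟨y, rfl⟩ := hx; exact hπmem y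
    exact Submodule.finiteDimensional_of_le this

end Aux

/-- If the inessential operators form a maximal two-sided ideal of `B(X)` and
`X` has a complemented subspace isomorphic to `X ⊕ X`, then for every nonzero Banach space `Y`
every surjective algebra homomorphism `ψ : B(X) → B(Y)` is injective. -/
theorem shai_of_inessential_maximal
    {X : Type*} [NormedAddCommGroup X] [NormedSpace ℂ X] [CompleteSpace X]
    (I : TwoSidedIdeal (X →L[ℂ] X))
    (hI : ∀ T : X →L[ℂ] X, T ∈ I ↔ IsInessentialOp T)
    (hmax : IsCoatom I)
    (hsq : ∃ P : X →L[ℂ] X, P * P = P ∧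
      Nonempty ((LinearMap.range (P : X →ₗ[ℂ] X)) ≃L[ℂ] (X × X))) :
    ∀ (Y : Type u) [NormedAddCommGroup Y] [NormedSpace ℂ Y] [CompleteSpace Y],
      Nontrivial Y →
        ∀ ψ : (X →L[ℂ] X) →ₐ[ℂ] (Y →L[ℂ] Y), Surjective ψ → Injective ψ := by
  intro Y _ _ _ hY ψ hsurj
  rw [injective_iff_map_eq_zero]
  intro T₀ hT₀
  by_contra hne
  -- Step C : ψ kills every inessential operator
  have hkillI : ∀ T : X →L[ℂ] X, IsInessentialOp T → ψ T = 0 := by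
    intro T hT
    by_contra hTne
    obtain ⟨y₀, hy₀⟩ : ∃ y₀, ψ T y₀ ≠ 0 := by
      by_contra h
      push_neg at h
      exact hTne (by ext y; simpa using h y)
    obtain ⟨g, -, hg⟩ := exists_dual_vector ℂ (ψ T y₀) (norm_ne_zero_iff.mpr hy₀)
    have hgz : g (ψ T y₀) ≠ 0 := by rw [hg]; simpa using hy₀
    set b : Y →L[ℂ] Y := ((g (ψ T y₀))⁻¹ • g).smulRight (-y₀) with hb
    obtain ⟨S, hS⟩ := hsurj b
    obtain ⟨V, F, hVU, hFfin⟩ := fredholm_left_inv _ (hT S)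
    have h1 : ψ V * ψ (1 + S * T) = 1 := by
      rw [← map_mul, hVU, map_sub, map_one, kill_finite_rank ψ hT₀ hne F hFfin, sub_zero]
    have h2 : (ψ (1 + S * T)) y₀ = 0 := by
      rw [map_add, map_one, map_mul, hS]
      have : b (ψ T y₀) = -y₀ := by
        simp only [hb, smulRight_apply, smul_apply, smul_eq_mul]
        rw [inv_mul_cancel₀ hgz, one_smul]
      simp [ContinuousLinearMap.add_apply, ContinuousLinearMap.mul_apply, this]
    have hz : y₀ = 0 := by
      have h3 : (ψ V) ((ψ (1 + S * T)) y₀) = y₀ := by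
        have := congrArg (fun q : Y →L[ℂ] Y => q y₀) h1
        simpa only [ContinuousLinearMap.mul_apply, ContinuousLinearMap.one_apply] using this
      rw [h2, map_zero] at h3
      exact h3.symm
    exact hy₀ (by rw [hz, map_zero])
  -- the ideal J of operators with finite-rank image under ψ
  have hJadd : ∀ {a b : X →L[ℂ] X},
      FiniteDimensional ℂ (LinearMap.range ((ψ a : Y →L[ℂ] Y) : Y →ₗ[ℂ] Y)) →
      FiniteDimensional ℂ (LinearMap.range ((ψ b : Y →L[ℂ] Y) : Y →ₗ[ℂ] Y)) →
      FiniteDimensional ℂ (LinearMap.range ((ψ (a + b) : Y →L[ℂ] Y) : Y →ₗ[ℂ] Y)) := by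
    intro a b ha hb
    haveI := ha; haveI := hb
    have hle : LinearMap.range ((ψ (a + b) : Y →L[ℂ] Y) : Y →ₗ[ℂ] Y) ≤
        LinearMap.range ((ψ a : Y →L[ℂ] Y) : Y →ₗ[ℂ] Y) ⊔
          LinearMap.range ((ψ b : Y →L[ℂ] Y) : Y →ₗ[ℂ] Y) := by
      rw [map_add]
      rintro y ⟨x, rfl⟩
      exact Submodule.mem_sup.2 ⟨ψ a x, ⟨x, rfl⟩, ψ b x, ⟨x, rfl⟩, rfl⟩
    exact Submodule.finiteDimensional_of_le hle
  set J : TwoSidedIdeal (X →L[ℂ] X) := TwoSidedIdeal.mk'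
    {T | FiniteDimensional ℂ (LinearMap.range ((ψ T : Y →L[ℂ] Y) : Y →ₗ[ℂ] Y))}
    (by
      show FiniteDimensional ℂ _
      rw [map_zero]
      have : LinearMap.range ((0 : Y →L[ℂ] Y) : Y →ₗ[ℂ] Y) = ⊥ := LinearMap.range_zero
      rw [this]; infer_instance)
    (fun ha hb => hJadd ha hb)
    (by
      intro x hx
      show FiniteDimensional ℂ _
      have : LinearMap.range ((ψ (-x) : Y →L[ℂ] Y) : Y →ₗ[ℂ] Y) =
          LinearMap.range ((ψ x : Y →L[ℂ] Y) : Y →ₗ[ℂ] Y) := by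
        rw [map_neg]; exact LinearMap.range_neg _
      rw [this]; exact hx)
    (by
      intro x y hy
      show FiniteDimensional ℂ _
      haveI : FiniteDimensional ℂ (LinearMap.range ((ψ y : Y →L[ℂ] Y) : Y →ₗ[ℂ] Y)) := hy
      have : LinearMap.range ((ψ (x * y) : Y →L[ℂ] Y) : Y →ₗ[ℂ] Y) =
          (LinearMap.range ((ψ y : Y →L[ℂ] Y) : Y →ₗ[ℂ] Y)).map
            ((ψ x : Y →L[ℂ] Y) : Y →ₗ[ℂ] Y) := by
        rw [map_mul, ContinuousLinearMap.mul_def, ContinuousLinearMap.toLinearMap_comp,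
          LinearMap.range_comp]
      rw [this]
      exact Module.Finite.map _ _)
    (by
      intro x y hx
      show FiniteDimensional ℂ _
      haveI : FiniteDimensional ℂ (LinearMap.range ((ψ x : Y →L[ℂ] Y) : Y →ₗ[ℂ] Y)) := hx
      have hle : LinearMap.range ((ψ (x * y) : Y →L[ℂ] Y) : Y →ₗ[ℂ] Y) ≤
          LinearMap.range ((ψ x : Y →L[ℂ] Y) : Y →ₗ[ℂ] Y) := by
        rw [map_mul, ContinuousLinearMap.mul_def, ContinuousLinearMap.toLinearMap_comp]
        exact LinearMap.range_comp_le_range _ _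
      exact Submodule.finiteDimensional_of_le hle)
    with hJ
  have memJ : ∀ T : X →L[ℂ] X, T ∈ J ↔
      FiniteDimensional ℂ (LinearMap.range ((ψ T : Y →L[ℂ] Y) : Y →ₗ[ℂ] Y)) := by
    intro T
    rw [hJ, TwoSidedIdeal.mem_mk']
    rfl
  have hIJ : I ≤ J := by
    intro T hTI
    rw [memJ, hkillI T ((hI T).1 hTI)]
    have : LinearMap.range ((0 : Y →L[ℂ] Y) : Y →ₗ[ℂ] Y) = ⊥ := LinearMap.range_zero
    rw [this]; infer_instance
  -- an element of J not in I
  obtain ⟨y₀, hy₀⟩ := exists_ne (0 : Y)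
  obtain ⟨g, -, hg⟩ := exists_dual_vector ℂ y₀ (norm_ne_zero_iff.mpr hy₀)
  set q : Y →L[ℂ] Y := g.smulRight y₀ with hq
  obtain ⟨Sq, hSq⟩ := hsurj q
  have hqne : q ≠ 0 := by
    intro h0
    have : q y₀ = 0 := by rw [h0]; rfl
    rw [hq] at this
    simp only [smulRight_apply, hg] at this
    rcases smul_eq_zero.1 this with h | h
    · exact hy₀ (by simpa [norm_eq_zero] using h)
    · exact hy₀ h
  have hSqJ : Sq ∈ J := by
    rw [memJ, hSq]
    have hle : LinearMap.range ((q : Y →L[ℂ] Y) : Y →ₗ[ℂ] Y) ≤ ℂ ∙ y₀ := by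
      rintro y ⟨x, rfl⟩
      exact Submodule.smul_mem _ _ (Submodule.mem_span_singleton_self y₀)
    exact Submodule.finiteDimensional_of_le hle
  have hSqI : Sq ∉ I := fun h => hqne (hSq ▸ hkillI Sq ((hI Sq).1 h))
  have hJtop : J = ⊤ := hmax.2 J (lt_of_le_of_ne hIJ (fun h => hSqI (h ▸ hSqJ)))
  haveI hYfin : FiniteDimensional ℂ Y := by
    have h1J : (1 : X →L[ℂ] X) ∈ J := by rw [hJtop]; trivial
    rw [memJ, map_one] at h1J
    have : LinearMap.range ((1 : Y →L[ℂ] Y) : Y →ₗ[ℂ] Y) = ⊤ := LinearMap.range_eq_top.2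
      (fun y => ⟨y, rfl⟩)
    rw [this] at h1J
    exact (Submodule.topEquiv (R := ℂ) (M := Y)).finiteDimensional
  -- doubling structure gives a contradiction with finite-dimensionality
  obtain ⟨P, hPP, ⟨e⟩⟩ := hsq
  set RP := LinearMap.range (P : X →ₗ[ℂ] X) with hRP
  set p : X →L[ℂ] RP := P.codRestrict RP (fun x => LinearMap.mem_range_self _ x) with hp
  have hpid : ∀ v : RP, p (v : X) = v := by
    rintro ⟨v, u, rfl⟩
    apply Subtype.ext
    exact ContinuousLinearMap.ext_iff.1 hPP u
  set s₁ : X →L[ℂ] X := RP.subtypeL ∘L ((e.symm : (X × X) →L[ℂ] RP) ∘L inl ℂ X X) with hs₁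
  set s₂ : X →L[ℂ] X := RP.subtypeL ∘L ((e.symm : (X × X) →L[ℂ] RP) ∘L inr ℂ X X) with hs₂
  set r₁ : X →L[ℂ] X := (fst ℂ X X) ∘L ((e : RP →L[ℂ] (X × X)) ∘L p) with hr₁
  set r₂ : X →L[ℂ] X := (snd ℂ X X) ∘L ((e : RP →L[ℂ] (X × X)) ∘L p) with hr₂
  have h11 : r₁ * s₁ = 1 := by
    ext x
    simp [hr₁, hs₁, ContinuousLinearMap.mul_apply, hpid]
  have h12 : r₁ * s₂ = 0 := by
    ext x
    simp [hr₁, hs₂, ContinuousLinearMap.mul_apply, hpid]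
  have h22 : r₂ * s₂ = 1 := by
    ext x
    simp [hr₂, hs₂, ContinuousLinearMap.mul_apply, hpid]
  have e1 : ∀ y, (ψ r₁) ((ψ s₁) y) = y := by
    intro y
    have := congrArg (fun q : Y →L[ℂ] Y => q y) (by rw [← map_mul, h11, map_one] :
      ψ r₁ * ψ s₁ = 1)
    simpa [ContinuousLinearMap.mul_apply] using this
  have e2 : ∀ y, (ψ r₂) ((ψ s₂) y) = y := by
    intro y
    have := congrArg (fun q : Y →L[ℂ] Y => q y) (by rw [← map_mul, h22, map_one] :
      ψ r₂ * ψ s₂ = 1)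
    simpa [ContinuousLinearMap.mul_apply] using this
  have e0 : (ψ r₁) ((ψ s₂) y₀) = 0 := by
    have := congrArg (fun q : Y →L[ℂ] Y => q y₀) (by rw [← map_mul, h12, map_zero] :
      ψ r₁ * ψ s₂ = 0)
    simpa [ContinuousLinearMap.mul_apply] using this
  have hinj1 : Injective ⇑(ψ r₁) := by
    have hs : Surjective ⇑(ψ r₁) := fun y => ⟨(ψ s₁) y, e1 y⟩
    exact (LinearMap.injective_iff_surjective
      (f := ((ψ r₁ : Y →L[ℂ] Y) : Y →ₗ[ℂ] Y))).2 hs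
  have hz2 : (ψ s₂) y₀ = 0 := hinj1 (by rw [e0, map_zero])
  have : y₀ = 0 := by rw [← e2 y₀, hz2, map_zero]
  exact hy₀ this
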